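/- If φ is an orthonormal N-frame and η ∈ T_φ, then ⟦φ+η, φ+η⟧ = I_N + ⟦η,η⟧, this matrix is symmetric positive definite, and consequently the components of φ+η are linearly independent in H₀. -/

import Mathlib

open scoped RealInnerProductSpace
open Matrix

/-- The outer product `⟦v,w⟧ ∈ ℝ^{N×N}` of two tuples, with entries `⟨v i, w j⟩`. -/
noncomputable def outerProd {N : ℕ} {H₀ : Type*} [NormedAddCommGroup H₀]
    [InnerProductSpace ℝ H₀] (v w : Fin N → H₀) : Matrix (Fin N) (Fin N) ℝ :=
  Matrix.of fun i j => ⟪v i, w j⟫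

/-- Multiplication of a tuple by a matrix from the right: `(vS)_j = Σ_i S_{ij} v_i`. -/
def smulMat {N : ℕ} {H₀ : Type*} [AddCommGroup H₀] [Module ℝ H₀]
    (v : Fin N → H₀) (S : Matrix (Fin N) (Fin N) ℝ) : Fin N → H₀ :=
  fun j => ∑ i, S i j • v i

/-- The inner product `(v,w)_H = Σ_j ⟨v_j, w_j⟩ = tr⟦v,w⟧`. -/
noncomputable def innerH {N : ℕ} {H₀ : Type*} [NormedAddCommGroup H₀]
    [InnerProductSpace ℝ H₀] (v w : Fin N → H₀) : ℝ :=
  ∑ j, ⟪v j, w j⟫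

lemma outerProd_quad {N : ℕ} {H₀ : Type*} [NormedAddCommGroup H₀]
    [InnerProductSpace ℝ H₀] (v : Fin N → H₀) (c : Fin N → ℝ) :
    c ⬝ᵥ (outerProd v v).mulVec c = ⟪∑ i, c i • v i, ∑ i, c i • v i⟫ := by
  simp only [dotProduct, Matrix.mulVec, dotProduct, outerProd, Matrix.of_apply,
    sum_inner, inner_sum, real_inner_smul_left, real_inner_smul_right, Finset.mul_sum]
  apply Finset.sum_congr rfl
  intro i _
  apply Finset.sum_congr rfl
  intro j _
  rw [real_inner_comm]
  ring

/-- for an orthonormal frame `φ` and a tangent vector `η`,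
`⟦φ+η, φ+η⟧ = I + ⟦η,η⟧` is symmetric positive definite, and the components of `φ+η`
are linearly independent. -/
theorem outerProd_add_tangent {N : ℕ} (hN : 1 ≤ N) {H₀ : Type*}
    [NormedAddCommGroup H₀] [InnerProductSpace ℝ H₀]
    (φ η : Fin N → H₀) (hφ : outerProd φ φ = 1)
    (hη : outerProd η φ + outerProd φ η = 0) :
    outerProd (φ + η) (φ + η) = 1 + outerProd η η ∧
    (1 + outerProd η η).IsSymm ∧
    (1 + outerProd η η).PosDef ∧
    LinearIndependent ℝ (φ + η) := by
  have hexp : outerProd (φ + η) (φ + η)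
      = outerProd φ φ + (outerProd η φ + outerProd φ η) + outerProd η η := by
    ext i j
    simp only [outerProd, Matrix.of_apply, Matrix.add_apply, Pi.add_apply, inner_add_left,
      inner_add_right]
    ring
  have heq : outerProd (φ + η) (φ + η) = 1 + outerProd η η := by
    rw [hexp, hφ, hη, add_zero]
  have hsymm : (1 + outerProd η η).IsSymm := by
    rw [Matrix.IsSymm]
    ext i j
    simp [outerProd, Matrix.add_apply, Matrix.one_apply, real_inner_comm, eq_comm]
  have hquad : ∀ c : Fin N → ℝ, c ⬝ᵥ (1 + outerProd η η).mulVec c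
      = c ⬝ᵥ c + ⟪∑ i, c i • η i, ∑ i, c i • η i⟫ := by
    intro c
    rw [Matrix.add_mulVec, dotProduct_add, Matrix.one_mulVec, outerProd_quad]
  have hpos : (1 + outerProd η η).PosDef := by
    refine Matrix.PosDef.of_dotProduct_mulVec_pos (by rw [Matrix.IsHermitian, Matrix.conjTranspose_eq_transpose_of_trivial]; exact hsymm) (fun c hc => ?_)
    have : c ⬝ᵥ (1 + outerProd η η).mulVec c = c ⬝ᵥ c + ⟪∑ i, c i • η i, ∑ i, c i • η i⟫ :=
      hquad c
    simp only [RCLike.star_def, dotProduct] at *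
    simp only [starRingEnd_apply, star_trivial] at *
    rw [this]
    have h1 : 0 < ∑ i, c i * c i := by
      have : ∃ i, c i ≠ 0 := by
        by_contra h
        push_neg at h
        exact hc (funext h)
      obtain ⟨i, hi⟩ := this
      calc (0:ℝ) < ∑ j, (if j = i then c i * c i else 0) := by
            rw [Finset.sum_ite_eq' Finset.univ i (fun _ => c i * c i)]
            simp [mul_self_pos.mpr hi]
          _ ≤ ∑ j, c j * c j := by
            apply Finset.sum_le_sum
            intro j _
            by_cases h : j = i
            · subst h; simp
            · simp [h, mul_self_nonneg]
    have h2 : (0:ℝ) ≤ ⟪∑ i, c i • η i, ∑ i, c i • η i⟫ := real_inner_self_nonneg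
    linarith
  refine ⟨heq, hsymm, hpos, ?_⟩
  rw [Fintype.linearIndependent_iff]
  intro c hc i
  by_contra hci
  have hcne : c ≠ 0 := fun h => hci (by rw [h]; rfl)
  have h0 : c ⬝ᵥ (outerProd (φ + η) (φ + η)).mulVec c = 0 := by
    rw [outerProd_quad, hc, inner_zero_left]
  rw [heq] at h0
  have := hpos.dotProduct_mulVec_pos hcne
  simp only [RCLike.star_def, starRingEnd_apply, star_trivial] at this
  rw [h0] at this
  exact lt_irrefl 0 this
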